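/- In the monoid K_ω, the element c = δ_1 γ_1 satisfies δ_k γ_k = c for every positive integer k, and c is central: x·c = c·x for every element x of K_ω. -/

import Mathlib

/-- Generators of the monoid `K_ω`: a cup `δ_k` and a cap `γ_k` for every positive integer `k`. -/
inductive KGen : Type
  | cup : ℕ+ → KGen
  | cap : ℕ+ → KGen

/-- Words in the generators, i.e. elements of the free monoid on the generators. -/
abbrev KWord : Type := FreeMonoid KGen

/-- The word consisting of the single cup generator `δ_k`. -/
def cupW (k : ℕ+) : KWord := FreeMonoid.of (KGen.cup k)

/-- The word consisting of the single cap generator `γ_k`. -/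
def capW (k : ℕ+) : KWord := FreeMonoid.of (KGen.cap k)

/-- The defining relations of the monoid `K_ω`: those of `L_ω` together with
`(cup-cap 4) : δ_k γ_k = δ_{k+1} γ_{k+1}`. -/
inductive KRel : KWord → KWord → Prop
  | cup {k l : ℕ+} (h : l ≤ k) : KRel (cupW k * cupW l) (cupW l * cupW (k + 2))
  | cap {k l : ℕ+} (h : l ≤ k) : KRel (capW l * capW k) (capW (k + 2) * capW l)
  | cupcap₁ {k l : ℕ+} (h : l ≤ k) : KRel (cupW l * capW (k + 2)) (capW k * cupW l)
  | cupcap₂ {k l : ℕ+} (h : l ≤ k) : KRel (cupW (k + 2) * capW l) (capW l * cupW k)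
  | cupcap₃ (k : ℕ+) : KRel (cupW k * capW (k + 1)) 1
  | cupcap₃' (k : ℕ+) : KRel (cupW (k + 1) * capW k) 1
  | cupcap₄ (k : ℕ+) : KRel (cupW k * capW k) (cupW (k + 1) * capW (k + 1))

/-- The smallest monoid congruence containing the defining relations of `K_ω`. -/
def KCon : Con KWord := conGen KRel

/-- The monoid `K_ω`, presented by the cups and caps subject to the relations `KRel`. -/
abbrev Komega : Type := KCon.Quotient

/-- The cup `δ_k` as an element of `K_ω`. -/
def dk (k : ℕ+) : Komega := KCon.mk' (cupW k)

/-- The cap `γ_k` as an element of `K_ω`. -/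
def gk (k : ℕ+) : Komega := KCon.mk' (capW k)

/-- The circle `c = δ_1 γ_1` of `K_ω`. -/
def circ : Komega := dk 1 * gk 1

lemma krel {a b : KWord} (h : KRel a b) : (KCon.mk' a : Komega) = KCon.mk' b :=
  KCon.eq.mpr (ConGen.Rel.of _ _ h)

lemma kmul (a b : KWord) : (KCon.mk' (a * b) : Komega) = KCon.mk' a * KCon.mk' b :=
  map_mul _ a b

lemma step (n : ℕ+) : dk (n + 1) * gk (n + 1) = dk n * gk n := by
  have h := krel (KRel.cupcap₄ n)
  rw [kmul, kmul] at h
  exact h.symm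

lemma dkgk_eq_circ (k : ℕ+) : dk k * gk k = circ := by
  obtain ⟨n, rfl⟩ : ∃ n : ℕ, n.succPNat = k := ⟨k.natPred, k.succPNat_natPred⟩
  induction n with
  | zero => rfl
  | succ m ih =>
    have : (m + 1).succPNat = m.succPNat + 1 := rfl
    rw [this, step, ih]

lemma dk_circ (l : ℕ+) : dk l * circ = circ * dk l := by
  have e1 : dk l * dk l = dk l * dk (l + 2) := by
    have h := krel (KRel.cup (le_refl l)); rwa [kmul, kmul] at h
  have e2 : dk l * gk (l + 2) = gk l * dk l := by
    have h := krel (KRel.cupcap₁ (le_refl l)); rwa [kmul, kmul] at h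
  calc dk l * circ = dk l * (dk (l + 2) * gk (l + 2)) := by rw [dkgk_eq_circ]
    _ = dk l * dk (l + 2) * gk (l + 2) := by rw [mul_assoc]
    _ = dk l * dk l * gk (l + 2) := by rw [← e1]
    _ = dk l * (dk l * gk (l + 2)) := by rw [mul_assoc]
    _ = dk l * (gk l * dk l) := by rw [e2]
    _ = dk l * gk l * dk l := by rw [mul_assoc]
    _ = circ * dk l := by rw [dkgk_eq_circ]

lemma gk_circ (l : ℕ+) : gk l * circ = circ * gk l := by
  have e1 : gk l * gk l = gk (l + 2) * gk l := by
    have h := krel (KRel.cap (le_refl l)); rwa [kmul, kmul] at h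
  have e2 : dk (l + 2) * gk l = gk l * dk l := by
    have h := krel (KRel.cupcap₂ (le_refl l)); rwa [kmul, kmul] at h
  calc gk l * circ = gk l * (dk l * gk l) := by rw [dkgk_eq_circ]
    _ = gk l * dk l * gk l := by rw [mul_assoc]
    _ = dk (l + 2) * gk l * gk l := by rw [e2]
    _ = dk (l + 2) * (gk l * gk l) := by rw [mul_assoc]
    _ = dk (l + 2) * (gk (l + 2) * gk l) := by rw [e1]
    _ = dk (l + 2) * gk (l + 2) * gk l := by rw [mul_assoc]
    _ = circ * gk l := by rw [dkgk_eq_circ]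

/-- In `K_ω`, the element `c = δ_1 γ_1` satisfies `δ_k γ_k = c` for every positive
integer `k`, and `c` is central. -/
theorem Komega.circle_unique_and_central :
    (∀ k : ℕ+, dk k * gk k = circ) ∧ (∀ x : Komega, x * circ = circ * x) := by
  refine ⟨dkgk_eq_circ, ?_⟩
  have hw : ∀ w : KWord, (KCon.mk' w : Komega) * circ = circ * KCon.mk' w := by
    intro w
    induction w using FreeMonoid.recOn with
    | one => simp
    | of_mul g xs ih =>
      rw [kmul, mul_assoc, ih, ← mul_assoc, ← mul_assoc]
      congr 1
      cases g with
      | cup k => exact dk_circ k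
      | cap k => exact gk_circ k
  intro x
  obtain ⟨w, rfl⟩ := Con.mk'_surjective x
  exact hw w
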